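/- arXiv:0711.3385 — 2 statements merged into one kernel-verified Lean document; each statement's English description precedes it below -/
import Mathlib

section
/- Condition (C_i) holds for all i ∈ I_n if and only if condition (3.7) holds for all pairs i, j ∈ I_n with i ≠ j. -/
open Filter Topology Set

noncomputable section

/-- `alphaLV a i x = Σ_j a i j * x j`. -/
def alphaLV {n : ℕ} (a : Fin n → Fin n → ℝ) (i : Fin n) (x : Fin n → ℝ) : ℝ :=
  ∑ j, a i j * x j

/-- A solution of the Lotka–Volterra system `x_i' = b_i x_i (1 - α_i x)` on `[0,∞)`
with values in the nonnegative orthant. -/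
def IsLVSolution {n : ℕ} (b : Fin n → ℝ) (a : Fin n → Fin n → ℝ)
    (x : ℝ → Fin n → ℝ) : Prop :=
  (∀ t ∈ Set.Ici (0:ℝ), ∀ i, 0 ≤ x t i) ∧
  (∀ t ∈ Set.Ici (0:ℝ), ∀ i,
    HasDerivWithinAt (fun s => x s i)
      (b i * x t i * (1 - alphaLV a i (x t))) (Set.Ici 0) t)

/-- An equilibrium of the Lotka–Volterra system in `ℝ^n_+`. -/
def IsLVEquilibrium {n : ℕ} (b : Fin n → ℝ) (a : Fin n → Fin n → ℝ)
    (y : Fin n → ℝ) : Prop :=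
  (∀ i, 0 ≤ y i) ∧ ∀ i, b i * y i * (1 - alphaLV a i y) = 0

/-- `y` is a global attractor: it is an equilibrium and every solution starting in
the open positive orthant converges to it. -/
def IsGlobalAttractor {n : ℕ} (b : Fin n → ℝ) (a : Fin n → Fin n → ℝ)
    (y : Fin n → ℝ) : Prop :=
  IsLVEquilibrium b a y ∧
  ∀ x : ℝ → Fin n → ℝ, IsLVSolution b a x → (∀ i, 0 < x 0 i) →
    ∀ i, Tendsto (fun t => x t i) atTop (nhds (y i))

open Classical in
/-- The projection `u^J`: `u` on `J`, zero off `J`. -/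
def projLV {n : ℕ} (u : Fin n → ℝ) (J : Set (Fin n)) : Fin n → ℝ :=
  fun i => if i ∈ J then u i else 0

open Classical in
/-- The vector `U` of (3.1), with the index set `I_n` replaced by `S`. -/
def Uvec {n : ℕ} (a : Fin n → Fin n → ℝ) (S : Set (Fin n)) (i : Fin n) : ℝ :=
  if ∃ j ∈ S, j ≠ i ∧ (a i i ≤ a j i ∨ a i j = 0) then (a i i)⁻¹
  else if (∀ j ∈ S, j ≠ i → a j i < a i i) ∧
      (∀ j ∈ S, ∀ k ∈ S, j ≠ i → k ≠ i → a j k ≤ a i k) then 0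
  else sSup {r | ∃ j ∈ S, ∃ k ∈ S, j ≠ i ∧ k ≠ i ∧ a i j < a k j ∧
      r = (a k j - a i j) / (a i i * a k j - a i j * a k i)}

/-- Condition `(C_k)` relative to a vector `U`: either `U^{I_n∖{k}}` is below `γ_k`,
or every point of `γ_k ∩ [0, U^{I_n∖{k}}]` is above `γ_j` for every `j ≠ k`. -/
def CondC {n : ℕ} (a : Fin n → Fin n → ℝ) (U : Fin n → ℝ) (k : Fin n) : Prop :=
  alphaLV a k (projLV U (({k} : Set (Fin n))ᶜ)) < 1 ∨
  ∀ j, j ≠ k → ∀ x : Fin n → ℝ,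
    (∀ i, 0 ≤ x i ∧ x i ≤ projLV U (({k} : Set (Fin n))ᶜ) i) →
    alphaLV a k x = 1 → 1 < alphaLV a j x

/-- Condition (3.7) for the pair `(i,j)` relative to a vector `U`. -/
def Cond37 {n : ℕ} (a : Fin n → Fin n → ℝ) (U : Fin n → ℝ) (i j : Fin n) : Prop :=
  max 0 (a i j / a j j * (1 - alphaLV a j (projLV U (({i, j} : Set (Fin n))ᶜ))))
    < 1 - alphaLV a i (projLV U (({i, j} : Set (Fin n))ᶜ))

/-- The vector `Y = (1/a₁₁, …, 1/aₙₙ)`. -/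
def Yvec {n : ℕ} (a : Fin n → Fin n → ℝ) : Fin n → ℝ := fun i => (a i i)⁻¹

section Helpers


variable {n : ℕ} (a : Fin n → Fin n → ℝ)

lemma alphaLV_mono (hnn : ∀ i j, 0 ≤ a i j) (k : Fin n) {x y : Fin n → ℝ}
    (h : ∀ m, x m ≤ y m) : alphaLV a k x ≤ alphaLV a k y :=
  Finset.sum_le_sum fun m _ => mul_le_mul_of_nonneg_left (h m) (hnn k m)

lemma alphaLV_update (k j : Fin n) (y : Fin n → ℝ) (t : ℝ) (hyj : y j = 0) :
    alphaLV a k (Function.update y j t) = alphaLV a k y + a k j * t := by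
  unfold alphaLV
  have h : ∀ m : Fin n, a k m * (Function.update y j t) m
      = a k m * y m + (if m = j then a k m * t else 0) := by
    intro m
    rcases eq_or_ne m j with rfl | h
    · simp [hyj]
    · simp [Function.update_of_ne h, h]
  rw [Finset.sum_congr rfl fun m _ => h m, Finset.sum_add_distrib]
  simp

lemma alphaLV_smul (k : Fin n) (s : ℝ) (x : Fin n → ℝ) :
    alphaLV a k (fun m => s * x m) = s * alphaLV a k x := by
  unfold alphaLV
  rw [Finset.mul_sum]
  exact Finset.sum_congr rfl fun m _ => by ring

lemma bddAbove_Eset (j : Fin n) : BddAbove {r : ℝ | ∃ h ∈ (Set.univ : Set (Fin n)),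
    ∃ k ∈ (Set.univ : Set (Fin n)), h ≠ j ∧ k ≠ j ∧ a j h < a k h ∧
    r = (a k h - a j h) / (a j j * a k h - a j h * a k j)} := by
  apply Set.Finite.bddAbove
  apply Set.Finite.subset (Set.finite_range
    (fun p : Fin n × Fin n => (a p.2 p.1 - a j p.1) / (a j j * a p.2 p.1 - a j p.1 * a p.2 j)))
  rintro r ⟨h, -, k, -, -, -, -, rfl⟩
  exact ⟨(h, k), rfl⟩

lemma U_nonneg (hdiag : ∀ i, 0 < a i i) (hnn : ∀ i j, 0 ≤ a i j) (j : Fin n) :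
    0 ≤ Uvec a Set.univ j := by
  unfold Uvec
  split_ifs with h1 h2
  · exact inv_nonneg.mpr (hdiag j).le
  · exact le_rfl
  · push_neg at h1 h2
    obtain ⟨p, -, q, -, hpj, hqj, hlt⟩ := h2 (fun k hk hkj => (h1 k hk hkj).1)
    have hjq : 0 < a j q := (hnn j q).lt_of_ne (Ne.symm (h1 q (Set.mem_univ q) hqj).2)
    have hpcol : a p j < a j j := (h1 p (Set.mem_univ p) hpj).1
    have hden : 0 < a j j * a p q - a j q * a p j := by nlinarith [hnn p j]
    have hmem : (a p q - a j q) / (a j j * a p q - a j q * a p j) ∈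
        {r : ℝ | ∃ h ∈ (Set.univ : Set (Fin n)), ∃ k ∈ (Set.univ : Set (Fin n)),
          h ≠ j ∧ k ≠ j ∧ a j h < a k h ∧
          r = (a k h - a j h) / (a j j * a k h - a j h * a k j)} :=
      ⟨q, Set.mem_univ q, p, Set.mem_univ p, hqj, hpj, hlt, rfl⟩
    have hrpos : 0 < (a p q - a j q) / (a j j * a p q - a j q * a p j) :=
      div_pos (by linarith) hden
    exact le_trans hrpos.le (le_csSup (bddAbove_Eset a j) hmem)

lemma lemA (hdiag : ∀ i, 0 < a i i) (hnn : ∀ i j, 0 ≤ a i j) {i j : Fin n} (hij : i ≠ j)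
    (x : Fin n → ℝ) (hx0 : ∀ m, 0 ≤ x m) (hxi : x i = 0)
    (hxj : Uvec a Set.univ j < x j) (hax : alphaLV a i x = 1) :
    1 < alphaLV a j x := by
  have hterm : ∀ m, 0 ≤ a j m * x m := fun m => mul_nonneg (hnn j m) (hx0 m)
  have hsingle : a j j * x j ≤ alphaLV a j x :=
    Finset.single_le_sum (fun m _ => hterm m) (Finset.mem_univ j)
  unfold Uvec at hxj
  split_ifs at hxj with h1 h2
  · -- case U j = (a j j)⁻¹
    have h2' : a j j * (a j j)⁻¹ < a j j * x j :=
      mul_lt_mul_of_pos_left hxj (hdiag j)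
    rw [mul_inv_cancel₀ (ne_of_gt (hdiag j))] at h2'
    linarith
  · -- case U j = 0 : hxj : 0 < x j
    have hlt : alphaLV a i x < alphaLV a j x := by
      apply Finset.sum_lt_sum
      · intro m _
        rcases eq_or_ne m j with rfl | hm
        · exact mul_le_mul_of_nonneg_right (h2.1 i (Set.mem_univ i) hij).le (hx0 m)
        · exact mul_le_mul_of_nonneg_right
            (h2.2 i (Set.mem_univ i) m (Set.mem_univ m) hij hm) (hx0 m)
      · exact ⟨j, Finset.mem_univ j,
          mul_lt_mul_of_pos_right (h2.1 i (Set.mem_univ i) hij) hxj⟩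
    linarith
  · -- case U j = sSup E
    push_neg at h1 h2
    have h1' : ∀ k, k ≠ j → a k j < a j j ∧ a j k ≠ 0 :=
      fun k hk => h1 k (Set.mem_univ k) hk
    obtain ⟨p, -, q, -, hpj, hqj, hlt⟩ := h2 (fun k hk hkj => (h1' k hkj).1)
    have hrow : ∀ m, m ≠ j → 0 < a j m :=
      fun m hm => (hnn j m).lt_of_ne (Ne.symm (h1' m hm).2)
    have hden : ∀ k m, k ≠ j → m ≠ j → a j m < a k m →
        0 < a j j * a k m - a j m * a k j := by
      intro k m hk hm hl
      have h1k := (h1' k hk).1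
      have h1m := hrow m hm
      nlinarith [hnn k j]
    have hkey : ∀ k m, k ≠ j → m ≠ j → a j m < a k m →
        (a k m - a j m) / (a j j * a k m - a j m * a k j) < x j := by
      intro k m hk hm hl
      refine lt_of_le_of_lt (le_csSup (bddAbove_Eset a j) ?_) hxj
      exact ⟨m, Set.mem_univ m, k, Set.mem_univ k, hm, hk, hl, rfl⟩
    have hθ : 0 < x j := by
      have hd := hden p q hpj hqj hlt
      have := hkey p q hpj hqj hlt
      have hr : 0 < (a p q - a j q) / (a j j * a p q - a j q * a p j) :=
        div_pos (by linarith) hd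
      linarith
    have hija : a i j < a j j := (h1' i hij).1
    have hAB : a i j * x j < a j j * x j := mul_lt_mul_of_pos_right hija hθ
    rcases lt_trichotomy (a j j * x j) 1 with hB | hB | hB
    · -- main case : a j j * x j < 1
      have hsplit_i : a i j * x j + ∑ m ∈ Finset.univ.erase j, a i m * x m = 1 := by
        rw [Finset.add_sum_erase _ (fun m => a i m * x m) (Finset.mem_univ j)]
        exact hax
      have hsplit_j : a j j * x j + ∑ m ∈ Finset.univ.erase j, a j m * x m
          = alphaLV a j x :=
        Finset.add_sum_erase _ (fun m => a j m * x m) (Finset.mem_univ j)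
      have hA : 0 < 1 - a i j * x j := by linarith
      have hpos : 0 < ∑ m ∈ Finset.univ.erase j, a i m * x m := by linarith
      have hex : ∃ m ∈ Finset.univ.erase j, 0 < a i m * x m := by
        by_contra hc
        push_neg at hc
        have : ∑ m ∈ Finset.univ.erase j, a i m * x m ≤ 0 :=
          Finset.sum_nonpos fun m hm => hc m hm
        linarith
      obtain ⟨m₀, hm₀mem, hm₀⟩ := hex
      have hm₀j : m₀ ≠ j := (Finset.mem_erase.mp hm₀mem).1
      have hxm₀ : 0 < x m₀ := by
        rcases (hx0 m₀).lt_or_eq with h | h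
        · exact h
        · exfalso; rw [← h] at hm₀; simp at hm₀
      have ham₀ : 0 < a i m₀ := by
        rcases (hnn i m₀).lt_or_eq with h | h
        · exact h
        · exfalso; rw [← h] at hm₀; simp at hm₀
      -- key pointwise inequality
      have hkey2 : ∀ m, m ≠ j →
          a i m * (1 - a j j * x j) ≤ a j m * (1 - a i j * x j) := by
        intro m hm
        rcases le_or_gt (a i m) (a j m) with hc | hc
        · nlinarith [hnn i m]
        · have hd := hden i m hij hm hc
          have hk := hkey i m hij hm hc
          rw [div_lt_iff₀ hd] at hk
          nlinarith
      have hkey2' : ∀ m, m ≠ j → 0 < a i m → 0 < x m →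
          a i m * (1 - a j j * x j) < a j m * (1 - a i j * x j) := by
        intro m hm him hxm
        rcases le_or_gt (a i m) (a j m) with hc | hc
        · nlinarith
        · have hd := hden i m hij hm hc
          have hk := hkey i m hij hm hc
          rw [div_lt_iff₀ hd] at hk
          nlinarith
      have hsum : ∑ m ∈ Finset.univ.erase j, (a i m * x m) * (1 - a j j * x j)
          < ∑ m ∈ Finset.univ.erase j, (a j m * x m) * (1 - a i j * x j) := by
        apply Finset.sum_lt_sum
        · intro m hm
          have hmj := (Finset.mem_erase.mp hm).1
          have := hkey2 m hmj
          nlinarith [hx0 m]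
        · refine ⟨m₀, hm₀mem, ?_⟩
          have := hkey2' m₀ hm₀j ham₀ hxm₀
          nlinarith
      rw [← Finset.sum_mul, ← Finset.sum_mul] at hsum
      have hSi : ∑ m ∈ Finset.univ.erase j, a i m * x m = 1 - a i j * x j := by
        linarith
      rw [hSi] at hsum
      -- (1 - aij θ)(1 - ajj θ) < S_j (1 - aij θ)
      have hSj : 1 - a j j * x j < ∑ m ∈ Finset.univ.erase j, a j m * x m := by
        nlinarith
      linarith
    · -- a j j * x j = 1
      have hsplit_i : a i j * x j + ∑ m ∈ Finset.univ.erase j, a i m * x m = 1 := by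
        rw [Finset.add_sum_erase _ (fun m => a i m * x m) (Finset.mem_univ j)]
        exact hax
      have hsplit_j : a j j * x j + ∑ m ∈ Finset.univ.erase j, a j m * x m
          = alphaLV a j x :=
        Finset.add_sum_erase _ (fun m => a j m * x m) (Finset.mem_univ j)
      have hpos : 0 < ∑ m ∈ Finset.univ.erase j, a i m * x m := by linarith
      have hex : ∃ m ∈ Finset.univ.erase j, 0 < a i m * x m := by
        by_contra hc
        push_neg at hc
        have : ∑ m ∈ Finset.univ.erase j, a i m * x m ≤ 0 :=
          Finset.sum_nonpos fun m hm => hc m hm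
        linarith
      obtain ⟨m₀, hm₀mem, hm₀⟩ := hex
      have hm₀j : m₀ ≠ j := (Finset.mem_erase.mp hm₀mem).1
      have hxm₀ : 0 < x m₀ := by
        rcases (hx0 m₀).lt_or_eq with h | h
        · exact h
        · exfalso; rw [← h] at hm₀; simp at hm₀
      have hjm₀ : 0 < a j m₀ := hrow m₀ hm₀j
      have hge : a j m₀ * x m₀ ≤ ∑ m ∈ Finset.univ.erase j, a j m * x m :=
        Finset.single_le_sum (fun m _ => hterm m) hm₀mem
      nlinarith
    · linarith

end Helpers

section Main

variable {n : ℕ}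

lemma condC_spec (a : Fin n → Fin n → ℝ) (hnn : ∀ i j, 0 ≤ a i j) {i : Fin n}
    (hC : CondC a (Uvec a Set.univ) i) :
    ∀ j, j ≠ i → ∀ x : Fin n → ℝ,
      (∀ m, 0 ≤ x m ∧ x m ≤ projLV (Uvec a Set.univ) (({i} : Set (Fin n))ᶜ) m) →
      alphaLV a i x = 1 → 1 < alphaLV a j x := by
  rcases hC with h | h
  · intro j hj x hx hax
    exfalso
    have := alphaLV_mono a hnn i (fun m => (hx m).2)
    rw [hax] at this
    linarith
  · exact h

theorem lemma3_2_iii' (a : Fin n → Fin n → ℝ)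
    (hdiag : ∀ i, 0 < a i i) (hnn : ∀ i j, 0 ≤ a i j) :
    (∀ i, CondC a (Uvec a Set.univ) i) ↔
      (∀ i j, i ≠ j → Cond37 a (Uvec a Set.univ) i j) := by
  classical
  have hU0 : ∀ m, 0 ≤ Uvec a Set.univ m := U_nonneg a hdiag hnn
  constructor
  · -- (C) implies (3.7)
    intro hC i j hij
    have hji : j ≠ i := Ne.symm hij
    set W : Fin n → ℝ := projLV (Uvec a Set.univ) (({i, j} : Set (Fin n))ᶜ) with hWdef
    have hWi : W i = 0 := by simp [hWdef, projLV]
    have hWj : W j = 0 := by simp [hWdef, projLV]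
    have hWm : ∀ m, m ≠ i → m ≠ j → W m = Uvec a Set.univ m := by
      intro m hmi hmj; simp [hWdef, projLV, hmi, hmj]
    have hW0 : ∀ m, 0 ≤ W m := by
      intro m; rw [hWdef]; unfold projLV; split_ifs
      exacts [hU0 m, le_rfl]
    have hWU : ∀ m, W m ≤ Uvec a Set.univ m := by
      intro m; rw [hWdef]; unfold projLV; split_ifs
      exacts [le_rfl, hU0 m]
    have hVi : ∀ m, m ≠ i → projLV (Uvec a Set.univ) (({i} : Set (Fin n))ᶜ) m
        = Uvec a Set.univ m := by
      intro m hm; simp [projLV, hm]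
    have hVj : ∀ m, m ≠ j → projLV (Uvec a Set.univ) (({j} : Set (Fin n))ᶜ) m
        = Uvec a Set.univ m := by
      intro m hm; simp [projLV, hm]
    have hWVi : ∀ m, W m ≤ projLV (Uvec a Set.univ) (({i} : Set (Fin n))ᶜ) m := by
      intro m
      by_cases hmi : m = i
      · rw [hmi, hWi]; simp [projLV]
      · rw [hVi m hmi]; exact hWU m
    have hWVj : ∀ m, W m ≤ projLV (Uvec a Set.univ) (({j} : Set (Fin n))ᶜ) m := by
      intro m
      by_cases hmj : m = j
      · rw [hmj, hWj]; simp [projLV]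
      · rw [hVj m hmj]; exact hWU m
    -- Step 1 : alphaLV a i W < 1
    have hαW : alphaLV a i W < 1 := by
      by_contra hcon
      push_neg at hcon
      have hpos : 0 < alphaLV a i W := by linarith
      set s : ℝ := (alphaLV a i W)⁻¹ with hs
      have hs0 : 0 < s := inv_pos.mpr hpos
      have hs1 : s ≤ 1 := by rw [hs]; exact inv_le_one_of_one_le₀ hcon
      have hx1 : alphaLV a i (fun m => s * W m) = 1 := by
        have h := alphaLV_smul a i s W
        rw [h, hs, inv_mul_cancel₀ (ne_of_gt hpos)]
      have hle1 : ∀ m, s * W m ≤ W m := by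
        intro m
        calc s * W m ≤ 1 * W m := mul_le_mul_of_nonneg_right hs1 (hW0 m)
          _ = W m := one_mul _
      have hcell : ∀ m, 0 ≤ s * W m ∧
          s * W m ≤ projLV (Uvec a Set.univ) (({i} : Set (Fin n))ᶜ) m :=
        fun m => ⟨mul_nonneg hs0.le (hW0 m), le_trans (hle1 m) (hWVi m)⟩
      have hj1 : 1 < alphaLV a j (fun m => s * W m) :=
        condC_spec a hnn (hC i) j hji (fun m => s * W m) hcell hx1
      have hjpos : 0 < alphaLV a j (fun m => s * W m) := by linarith
      set c : ℝ := (alphaLV a j (fun m => s * W m))⁻¹ with hc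
      have hc0 : 0 < c := inv_pos.mpr hjpos
      have hc1 : c < 1 := by rw [hc]; exact inv_lt_one_of_one_lt₀ hj1
      have hx2 : alphaLV a j (fun m => c * (s * W m)) = 1 := by
        have h : alphaLV a j (fun m => c * (s * W m))
            = c * alphaLV a j (fun m => s * W m) := alphaLV_smul a j c _
        rw [h, hc, inv_mul_cancel₀ (ne_of_gt hjpos)]
      have hcell2 : ∀ m, 0 ≤ c * (s * W m) ∧
          c * (s * W m) ≤ projLV (Uvec a Set.univ) (({j} : Set (Fin n))ᶜ) m := by
        intro m
        have h0 : 0 ≤ s * W m := mul_nonneg hs0.le (hW0 m)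
        refine ⟨mul_nonneg hc0.le h0, ?_⟩
        calc c * (s * W m) ≤ 1 * (s * W m) := mul_le_mul_of_nonneg_right hc1.le h0
          _ = s * W m := one_mul _
          _ ≤ W m := hle1 m
          _ ≤ _ := hWVj m
      have hi1 : 1 < alphaLV a i (fun m => c * (s * W m)) :=
        condC_spec a hnn (hC j) i hij (fun m => c * (s * W m)) hcell2 hx2
      have h : alphaLV a i (fun m => c * (s * W m))
          = c * alphaLV a i (fun m => s * W m) := alphaLV_smul a i c _
      rw [h, hx1, mul_one] at hi1
      linarith
    -- Step 2
    rcases (hnn i j).eq_or_lt with haij | haij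
    · -- a i j = 0
      unfold Cond37
      rw [← hWdef, ← haij]
      have h0 : (0:ℝ) / a j j * (1 - alphaLV a j W) = 0 := by
        rw [zero_div, zero_mul]
      rw [h0, max_self]
      linarith
    · -- 0 < a i j
      have ht : 0 < (1 - alphaLV a i W) / a i j := div_pos (by linarith) haij
      have hat : a i j * ((1 - alphaLV a i W) / a i j) = 1 - alphaLV a i W :=
        mul_div_cancel₀ _ (ne_of_gt haij)
      set t : ℝ := (1 - alphaLV a i W) / a i j with htdef
      have hαx : alphaLV a i (Function.update W j t) = 1 := by
        rw [alphaLV_update a i j W t hWj]; linarith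
      have hαj : alphaLV a j (Function.update W j t) = alphaLV a j W + a j j * t :=
        alphaLV_update a j j W t hWj
      have h1lt : 1 < alphaLV a j (Function.update W j t) := by
        rcases le_or_gt t (Uvec a Set.univ j) with hle | hgt
        · apply condC_spec a hnn (hC i) j hji _ ?_ hαx
          intro m
          by_cases hmj : m = j
          · rw [hmj, Function.update_self]
            refine ⟨ht.le, ?_⟩
            rw [hVi j hji]; exact hle
          · rw [Function.update_of_ne hmj]
            exact ⟨hW0 m, hWVi m⟩
        · apply lemA a hdiag hnn hij (Function.update W j t) ?_ ?_ ?_ hαx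
          · intro m
            by_cases hmj : m = j
            · rw [hmj, Function.update_self]; exact ht.le
            · rw [Function.update_of_ne hmj]; exact hW0 m
          · rw [Function.update_of_ne hij, hWi]
          · rw [Function.update_self]; exact hgt
      rw [hαj] at h1lt
      unfold Cond37
      rw [← hWdef]
      apply max_lt
      · linarith
      · have hd : 0 < a i j / a j j := div_pos haij (hdiag j)
        have hlt : a i j / a j j * (1 - alphaLV a j W) < a i j / a j j * (a j j * t) :=
          mul_lt_mul_of_pos_left (by linarith) hd
        have he : a i j / a j j * (a j j * t) = a i j * t := by
          rw [← mul_assoc, div_mul_cancel₀ _ (ne_of_gt (hdiag j))]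
        rw [he] at hlt
        linarith
  · -- (3.7) implies (C)
    intro h37 i
    refine Or.inr ?_
    intro j hji x hx hαx
    have hij : i ≠ j := Ne.symm hji
    set W : Fin n → ℝ := projLV (Uvec a Set.univ) (({i, j} : Set (Fin n))ᶜ) with hWdef
    have hWi : W i = 0 := by simp [hWdef, projLV]
    have hWj : W j = 0 := by simp [hWdef, projLV]
    have hWm : ∀ m, m ≠ i → m ≠ j → W m = Uvec a Set.univ m := by
      intro m hmi hmj; simp [hWdef, projLV, hmi, hmj]
    have hW0 : ∀ m, 0 ≤ W m := by
      intro m; rw [hWdef]; unfold projLV; split_ifs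
      exacts [hU0 m, le_rfl]
    have h37ij := h37 i j hij
    unfold Cond37 at h37ij
    rw [← hWdef] at h37ij
    have hαiW : alphaLV a i W < 1 := by
      have h := le_max_left (0:ℝ) (a i j / a j j * (1 - alphaLV a j W))
      linarith
    have h2 : a i j / a j j * (1 - alphaLV a j W) < 1 - alphaLV a i W :=
      lt_of_le_of_lt (le_max_right _ _) h37ij
    have h2' : a i j * (1 - alphaLV a j W) < a j j * (1 - alphaLV a i W) := by
      have h := mul_lt_mul_of_pos_left h2 (hdiag j)
      have he : a j j * (a i j / a j j * (1 - alphaLV a j W))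
          = a i j * (1 - alphaLV a j W) := by
        rw [div_mul_eq_mul_div, mul_comm (a j j), div_mul_cancel₀ _ (ne_of_gt (hdiag j))]
      rw [he] at h
      exact h
    have hxi : x i = 0 := by
      have h1 := (hx i).1
      have h2'' := (hx i).2
      have he : projLV (Uvec a Set.univ) (({i} : Set (Fin n))ᶜ) i = 0 := by
        simp [projLV]
      rw [he] at h2''
      linarith
    have hxU : ∀ m, m ≠ i → x m ≤ Uvec a Set.univ m := by
      intro m hmi
      have h := (hx m).2
      have he : projLV (Uvec a Set.univ) (({i} : Set (Fin n))ᶜ) m = Uvec a Set.univ m := by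
        simp [projLV, hmi]
      rwa [he] at h
    set y : Fin n → ℝ := Function.update x j 0 with hydef
    have hyj : y j = 0 := Function.update_self j 0 x
    have hyi : y i = 0 := by rw [hydef, Function.update_of_ne hij]; exact hxi
    have hy0 : ∀ m, 0 ≤ y m := by
      intro m
      by_cases hm : m = j
      · rw [hm, hyj]
      · rw [hydef, Function.update_of_ne hm]; exact (hx m).1
    have hyW : ∀ m, y m ≤ W m := by
      intro m
      by_cases hmj : m = j
      · rw [hmj, hyj, hWj]
      · rw [hydef, Function.update_of_ne hmj]
        by_cases hmi : m = i
        · rw [hmi, hxi, hWi]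
        · rw [hWm m hmi hmj]; exact hxU m hmi
    have hxy : Function.update y j (x j) = x := by
      rw [hydef, Function.update_idem, Function.update_eq_self]
    have hsplit_i : alphaLV a i y + a i j * x j = 1 := by
      have h := alphaLV_update a i j y (x j) hyj
      rw [hxy, hαx] at h
      linarith
    have hsplit_j : alphaLV a j x = alphaLV a j y + a j j * x j := by
      have h := alphaLV_update a j j y (x j) hyj
      rw [hxy] at h
      exact h
    have haij : 0 < a i j := by
      rcases (hnn i j).eq_or_lt with h | h
      · exfalso
        have hmono := alphaLV_mono a hnn i hyW
        rw [← h, zero_mul, add_zero] at hsplit_i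
        linarith
      · exact h
    have hFexp : ∀ z : Fin n → ℝ,
        a j j * (1 - alphaLV a i z) - a i j * (1 - alphaLV a j z)
        = (a j j - a i j) - ∑ m, (a j j * a i m - a i j * a j m) * z m := by
      intro z
      have h1 : ∑ m, (a j j * a i m - a i j * a j m) * z m
          = a j j * alphaLV a i z - a i j * alphaLV a j z := by
        unfold alphaLV
        rw [Finset.mul_sum, Finset.mul_sum, ← Finset.sum_sub_distrib]
        exact Finset.sum_congr rfl fun m _ => by ring
      rw [h1]; ring
    set g : Fin n → ℝ := fun m =>
      if m ≠ i ∧ m ≠ j ∧ 0 < a j j * a i m - a i j * a j m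
      then Uvec a Set.univ m else 0 with hgdef
    have hgi : g i = 0 := by rw [hgdef]; simp
    have hgj : g j = 0 := by rw [hgdef]; simp
    have hg0 : ∀ m, 0 ≤ g m := by
      intro m; simp only [hgdef]; split_ifs
      exacts [hU0 m, le_rfl]
    have hgW : ∀ m, g m ≤ W m := by
      intro m; simp only [hgdef]; split_ifs with h
      · rw [hWm m h.1 h.2.1]
      · exact hW0 m
    have hgy : ∀ m, (a j j * a i m - a i j * a j m) * y m
        ≤ (a j j * a i m - a i j * a j m) * g m := by
      intro m
      simp only [hgdef]; split_ifs with h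
      · apply mul_le_mul_of_nonneg_left _ h.2.2.le
        calc y m ≤ W m := hyW m
          _ = Uvec a Set.univ m := hWm m h.1 h.2.1
      · rw [mul_zero]
        by_cases hmi : m = i
        · rw [hmi, hyi, mul_zero]
        · by_cases hmj : m = j
          · rw [hmj, hyj, mul_zero]
          · have hc : a j j * a i m - a i j * a j m ≤ 0 := by
              by_contra hc'
              push_neg at hc'
              exact h ⟨hmi, hmj, hc'⟩
            exact mul_nonpos_of_nonpos_of_nonneg hc (hy0 m)
    have hFyg : a j j * (1 - alphaLV a i g) - a i j * (1 - alphaLV a j g)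
        ≤ a j j * (1 - alphaLV a i y) - a i j * (1 - alphaLV a j y) := by
      rw [hFexp y, hFexp g]
      have h := Finset.sum_le_sum (fun m (_ : m ∈ Finset.univ) => hgy m)
      linarith
    have hFg : 0 < a j j * (1 - alphaLV a i g) - a i j * (1 - alphaLV a j g) := by
      by_cases hall : ∀ m, m ≠ i → m ≠ j → 0 ≤ a j j * a i m - a i j * a j m
      · have hsame : ∑ m, (a j j * a i m - a i j * a j m) * g m
            = ∑ m, (a j j * a i m - a i j * a j m) * W m := by
          apply Finset.sum_congr rfl
          intro m _
          by_cases hmi : m = i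
          · rw [hmi, hgi, hWi]
          · by_cases hmj : m = j
            · rw [hmj, hgj, hWj]
            · simp only [hgdef]; split_ifs with h
              · rw [hWm m hmi hmj]
              · have hc : a j j * a i m - a i j * a j m ≤ 0 := by
                  by_contra hc'
                  push_neg at hc'
                  exact h ⟨hmi, hmj, hc'⟩
                have hc0 : a j j * a i m - a i j * a j m = 0 :=
                  le_antisymm hc (hall m hmi hmj)
                rw [hc0, zero_mul, zero_mul]
        rw [hFexp g, hsame, ← hFexp W]
        linarith
      · push_neg at hall
        obtain ⟨q, hqi, hqj, hq⟩ := hall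
        have hαig : alphaLV a i g ≤ alphaLV a i W := alphaLV_mono a hnn i hgW
        have ht' : 0 < (1 - alphaLV a i g) / a i j := div_pos (by linarith) haij
        have hat' : a i j * ((1 - alphaLV a i g) / a i j) = 1 - alphaLV a i g :=
          mul_div_cancel₀ _ (ne_of_gt haij)
        set t' : ℝ := (1 - alphaLV a i g) / a i j with ht'def
        rcases le_or_gt t' (Uvec a Set.univ j) with hle | hgt
        · exfalso
          have h37iq := h37 i q (Ne.symm hqi)
          unfold Cond37 at h37iq
          have hlt1 : alphaLV a i (projLV (Uvec a Set.univ) (({i, q} : Set (Fin n))ᶜ)) < 1 := by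
            have h := le_max_left (0:ℝ) (a i q / a q q *
              (1 - alphaLV a q (projLV (Uvec a Set.univ) (({i, q} : Set (Fin n))ᶜ))))
            linarith
          have hupd : alphaLV a i (Function.update g j (Uvec a Set.univ j))
              = alphaLV a i g + a i j * Uvec a Set.univ j := alphaLV_update a i j g _ hgj
          have hmono : alphaLV a i (Function.update g j (Uvec a Set.univ j))
              ≤ alphaLV a i (projLV (Uvec a Set.univ) (({i, q} : Set (Fin n))ᶜ)) := by
            apply alphaLV_mono a hnn
            intro m
            by_cases hmj : m = j
            · rw [hmj, Function.update_self]
              have he : projLV (Uvec a Set.univ) (({i, q} : Set (Fin n))ᶜ) j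
                  = Uvec a Set.univ j := by
                simp [projLV, hji, Ne.symm hqj]
              rw [he]
            · rw [Function.update_of_ne hmj]
              simp only [hgdef]
              split_ifs with h
              · have hmq : m ≠ q := by
                  rintro rfl
                  linarith [h.2.2]
                have he : projLV (Uvec a Set.univ) (({i, q} : Set (Fin n))ᶜ) m
                    = Uvec a Set.univ m := by
                  simp [projLV, h.1, hmq]
                rw [he]
              · unfold projLV; split_ifs
                exacts [hU0 m, le_rfl]
          have hb : a i j * t' ≤ a i j * Uvec a Set.univ j :=
            mul_le_mul_of_nonneg_left hle haij.le
          linarith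
        · have hαx' : alphaLV a i (Function.update g j t') = 1 := by
            rw [alphaLV_update a i j g t' hgj]; linarith
          have hlem := lemA a hdiag hnn hij (Function.update g j t') ?_ ?_ ?_ hαx'
          · have hαjx' : alphaLV a j (Function.update g j t')
                = alphaLV a j g + a j j * t' := alphaLV_update a j j g t' hgj
            rw [hαjx'] at hlem
            have hkey : 0 < a i j * (alphaLV a j g + a j j * t' - 1) :=
              mul_pos haij (by linarith)
            have h5 : a j j * (a i j * t') = a j j * (1 - alphaLV a i g) := by
              rw [hat']
            nlinarith [hkey, h5]
          · intro m
            by_cases hmj : m = j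
            · rw [hmj, Function.update_self]; exact ht'.le
            · rw [Function.update_of_ne hmj]; exact hg0 m
          · rw [Function.update_of_ne hij]; exact hgi
          · rw [Function.update_self]; exact hgt
    have hFy := lt_of_lt_of_le hFg hFyg
    have h1y : 1 - alphaLV a i y = a i j * x j := by linarith
    rw [h1y] at hFy
    rw [hsplit_j]
    nlinarith [hFy, haij]

end Main


/-- Lemma 3.2(iii): condition `(C_i)` holds for all `i ∈ I_n` iff (3.7) holds for
all pairs `i ≠ j`. -/
theorem lemma3_2_iii (n : ℕ) (hn : 2 ≤ n) (b : Fin n → ℝ) (a : Fin n → Fin n → ℝ)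
    (hb : ∀ i, 0 < b i) (hdiag : ∀ i, 0 < a i i) (hnn : ∀ i j, 0 ≤ a i j) :
    (∀ i, CondC a (Uvec a Set.univ) i) ↔
      (∀ i j, i ≠ j → Cond37 a (Uvec a Set.univ) i j) := by
  exact lemma3_2_iii' a hdiag hnn
end
end

section
/- Assume a_{jℓ} < a_{ℓℓ} for all 1 ≤ ℓ < j ≤ n, and a_{jj} ≤ a_{j−1,j} ≤ ⋯ ≤ a_{1j} for all j ∈ I_n with j ≥ 2. Then the equilibrium Y^{{n}} (the point whose n-th coordinate is 1/a_{nn} and whose other coordinates are 0) is a global attractor. -/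
open Filter Topology Set

noncomputable section

set_option maxHeartbeats 1000000


/-- Core comparison: right-derivative bounded by `r` on `[s,t]` gives a linear bound. -/
lemma LV_core_le {f d : ℝ → ℝ} {s t r : ℝ} (h0 : 0 ≤ s) (hst : s ≤ t)
    (hf : ∀ u ∈ Icc s t, HasDerivWithinAt f (d u) (Ici 0) u)
    (hd : ∀ u ∈ Icc s t, d u ≤ r) : f t ≤ f s + r * (t - s) := by
  have hcont : ContinuousOn f (Icc s t) := fun u hu =>
    ((hf u hu).continuousWithinAt).mono (fun v hv => le_trans h0 hv.1)
  have hB : ContinuousOn (fun u => f s + r * (u - s)) (Icc s t) := by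
    fun_prop
  have hB' : ∀ u ∈ Ico s t, HasDerivWithinAt (fun u => f s + r * (u - s)) r (Ici u) u := by
    intro u _
    have : HasDerivAt (fun u => f s + r * (u - s)) (r * 1) u := by
      exact (((hasDerivAt_id u).sub_const s).const_mul r).const_add (f s)
    simpa using this.hasDerivWithinAt
  have key := image_le_of_deriv_right_le_deriv_boundary hcont
    (fun u hu => (hf u ⟨hu.1, le_of_lt hu.2⟩).mono (fun v hv => le_trans (le_trans h0 hu.1) hv))
    (by simp) hB hB' (fun u hu => hd u ⟨hu.1, le_of_lt hu.2⟩)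
  exact key (right_mem_Icc.2 hst)

/-- Escape lemma: if `F` decreases at a fixed rate whenever it stays `≥ R0`, then
eventually `F < R0 + η`. -/
lemma LV_inv_lemma {F : ℝ → ℝ} {T R0 r : ℝ} (hr : r < 0) (hF : ContinuousOn F (Ici T))
    (H : ∀ s t, T ≤ s → s ≤ t → (∀ u ∈ Icc s t, R0 ≤ F u) → F t ≤ F s + r * (t - s)) :
    ∀ η > 0, ∀ᶠ t in atTop, F t < R0 + η := by
  intro η hη
  -- step 1 : some point below R0
  obtain ⟨s0, hs0T, hs0⟩ : ∃ s0, T ≤ s0 ∧ F s0 ≤ R0 := by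
    by_contra hcon
    push_neg at hcon
    obtain ⟨t, ht⟩ : ∃ t, max T ((R0 - F T) / r + T + 1) ≤ t := ⟨_, le_refl _⟩
    have hTt : T ≤ t := le_trans (le_max_left _ _) ht
    have hFt := H T t le_rfl hTt (fun u hu => le_of_lt (hcon u (le_trans le_rfl hu.1)))
    have h2 : (R0 - F T) / r + T + 1 ≤ t := le_trans (le_max_right _ _) ht
    have : F t ≤ F T + r * (t - T) := hFt
    have hrt : r * (t - T) < R0 - F T := by
      have h3 : (R0 - F T) / r + 1 ≤ t - T := by linarith
      have : r * (t - T) ≤ r * ((R0 - F T) / r + 1) := by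
        apply mul_le_mul_of_nonpos_left h3 (le_of_lt hr)
      calc r * (t - T) ≤ r * ((R0 - F T) / r + 1) := this
        _ = R0 - F T + r := by
            rw [mul_add, mul_one, mul_div_cancel₀ _ (ne_of_lt hr)]
        _ < R0 - F T := by linarith
    have := hcon t hTt
    linarith
  -- step 2 : stays below R0 + η afterwards
  rw [eventually_atTop]
  refine ⟨s0, fun t1 ht1 => ?_⟩
  by_contra hcon
  push_neg at hcon
  have hlt : s0 < t1 := by
    rcases lt_or_eq_of_le ht1 with h | h
    · exact h
    · exfalso; rw [← h] at hcon; linarith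
  set A : Set ℝ := {u ∈ Icc s0 t1 | F u ≤ R0} with hA
  have hAne : A.Nonempty := ⟨s0, ⟨le_rfl, ht1⟩, hs0⟩
  have hAbdd : BddAbove A := ⟨t1, fun u hu => hu.1.2⟩
  have hAclosed : IsClosed A := by
    have hFc : ContinuousOn F (Icc s0 t1) := hF.mono (fun u hu => le_trans hs0T hu.1)
    have : A = Icc s0 t1 ∩ F ⁻¹' (Iic R0) := by
      ext u; simp [hA, Set.mem_sep_iff, and_comm]
    rw [this]
    exact ContinuousOn.preimage_isClosed_of_isClosed hFc isClosed_Icc isClosed_Iic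
  set s' := sSup A with hs'
  have hs'A : s' ∈ A := hAclosed.csSup_mem hAne hAbdd
  have hs'le : s' ≤ t1 := hs'A.1.2
  have hs's0 : s0 ≤ s' := hs'A.1.1
  have hs'lt : s' < t1 := by
    rcases lt_or_eq_of_le hs'le with h | h
    · exact h
    · exfalso; have := hs'A.2; rw [h] at this; linarith
  have hmid : ∀ u, s' < u → u ≤ t1 → R0 < F u := by
    intro u hu1 hu2
    by_contra hc
    push_neg at hc
    have : u ∈ A := ⟨⟨le_trans hs's0 (le_of_lt hu1), hu2⟩, hc⟩
    have := le_csSup hAbdd this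
    linarith
  have hFs' : R0 ≤ F s' := by
    have hcw : ContinuousWithinAt F (Ioc s' t1) s' := by
      apply (hF s' (le_trans hs0T hs's0)).mono
      intro u hu; exact le_trans (le_trans hs0T hs's0) (le_of_lt hu.1)
    have hne : (𝓝[Ioc s' t1] s').NeBot := by
      rw [nhdsWithin_Ioc_eq_nhdsGT hs'lt]
      infer_instance
    refine ge_of_tendsto hcw ?_
    filter_upwards [self_mem_nhdsWithin] with u hu
    exact le_of_lt (hmid u hu.1 hu.2)
  have hall : ∀ u ∈ Icc s' t1, R0 ≤ F u := by
    intro u hu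
    rcases eq_or_lt_of_le hu.1 with h | h
    · rw [← h]; exact hFs'
    · exact le_of_lt (hmid u h hu.2)
  have := H s' t1 (le_trans hs0T hs's0) hs'le hall
  have hneg : r * (t1 - s') < 0 := mul_neg_of_neg_of_pos hr (by linarith)
  have : F t1 ≤ F s' := by linarith
  have : F t1 ≤ R0 := le_trans this hs'A.2
  linarith

/-- Continuity of a finite `inf'` of continuous functions. -/
lemma LV_contOn_inf' {ι : Type*} {U : Set ℝ} (s : Finset ι) (hs : s.Nonempty)
    (f : ι → ℝ → ℝ) (hf : ∀ i, ContinuousOn (f i) U) :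
    ContinuousOn (fun t => s.inf' hs (fun i => f i t)) U :=
  ContinuousOn.finset_inf'_apply hs (fun i _ => hf i)


section Basics

variable {n : ℕ} {b : Fin n → ℝ} {a : Fin n → Fin n → ℝ} {x : ℝ → Fin n → ℝ}

lemma LV_contx (hsol : IsLVSolution b a x) (i : Fin n) :
    ContinuousOn (fun t => x t i) (Ici 0) :=
  fun t ht => (hsol.2 t ht i).continuousWithinAt

lemma LV_cont_alpha (hsol : IsLVSolution b a x) (k : Fin n) :
    ContinuousOn (fun t => alphaLV a k (x t)) (Ici 0) := by
  have : (fun t => alphaLV a k (x t)) = fun t => ∑ j, a k j * x t j := rfl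
  rw [this]
  exact continuousOn_finset_sum _ (fun j _ => (LV_contx hsol j).const_smul (a k j))

/-- Positivity of solutions starting in the open orthant. -/
lemma LV_pos (hsol : IsLVSolution b a x) (hx0 : ∀ i, 0 < x 0 i) :
    ∀ t ∈ Ici (0:ℝ), ∀ i, 0 < x t i := by
  intro t1 ht1 i
  rcases eq_or_lt_of_le (Set.mem_Ici.mp ht1) with h | h
  · rw [← h]; exact hx0 i
  set c : ℝ → ℝ := fun u => b i * (1 - alphaLV a i (x u)) with hc
  have hcont : ContinuousOn c (Icc 0 t1) := by
    apply ContinuousOn.mul continuousOn_const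
    exact (continuousOn_const.sub ((LV_cont_alpha hsol i).mono Icc_subset_Ici_self))
  obtain ⟨K, hK⟩ := (isCompact_Icc : IsCompact (Icc (0:ℝ) t1)).exists_bound_of_continuousOn hcont
  set g : ℝ → ℝ := fun u => x u i * Real.exp (K * u) with hg
  have hgd : ∀ u ∈ Icc (0:ℝ) t1, HasDerivWithinAt g
      (c u * x u i * Real.exp (K * u) + x u i * (Real.exp (K * u) * K)) (Ici 0) u := by
    intro u hu
    have h1 : HasDerivWithinAt (fun s => x s i) (c u * x u i) (Ici 0) u := by
      have := hsol.2 u hu.1 i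
      have heq : b i * x u i * (1 - alphaLV a i (x u)) = c u * x u i := by rw [hc]; ring
      rwa [heq] at this
    have h2 : HasDerivAt (fun s => Real.exp (K * s)) (Real.exp (K * u) * K) u := by
      simpa using (HasDerivAt.exp ((hasDerivAt_id u).const_mul K))
    exact h1.mul (h2.hasDerivWithinAt)
  have hmono : -(g t1) ≤ -(g 0) + 0 * (t1 - 0) := by
    apply LV_core_le le_rfl ht1 (fun u hu => (hgd u hu).neg)
    intro u hu
    have hxu : 0 ≤ x u i := hsol.1 u hu.1 i
    have hcK : -K ≤ c u := by have := hK u hu; rw [Real.norm_eq_abs, abs_le] at this; linarith [this.1]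
    have hexp : 0 < Real.exp (K * u) := Real.exp_pos _
    have : 0 ≤ (c u + K) * x u i * Real.exp (K * u) := by
      apply mul_nonneg (mul_nonneg (by linarith) hxu) (le_of_lt hexp)
    nlinarith
  have hg0 : g 0 = x 0 i := by simp [hg]
  have hgt1 : 0 < g t1 := by
    have := hx0 i
    rw [hg0] at hmono; simp at hmono
    linarith
  by_contra hcon
  push_neg at hcon
  have : g t1 ≤ 0 := mul_nonpos_of_nonpos_of_nonneg hcon (le_of_lt (Real.exp_pos _))
  linarith

lemma LV_logderiv (hsol : IsLVSolution b a x) (hx0 : ∀ i, 0 < x 0 i) (i : Fin n)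
    {t : ℝ} (ht : t ∈ Ici (0:ℝ)) :
    HasDerivWithinAt (fun s => Real.log (x s i)) (b i * (1 - alphaLV a i (x t))) (Ici 0) t := by
  have hpos := LV_pos hsol hx0 t ht i
  have h := (hsol.2 t ht i).log (ne_of_gt hpos)
  have heq : b i * x t i * (1 - alphaLV a i (x t)) / x t i = b i * (1 - alphaLV a i (x t)) := by
    field_simp
  rwa [heq] at h

lemma LV_contlog (hsol : IsLVSolution b a x) (hx0 : ∀ i, 0 < x 0 i) (i : Fin n) :
    ContinuousOn (fun t => Real.log (x t i)) (Ici 0) :=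
  fun t ht => ((LV_logderiv hsol hx0 i ht).continuousWithinAt)

/-- Eventual upper bound: `x_i` eventually stays below any `M > 1/a_ii`. -/
lemma LV_upper (hsol : IsLVSolution b a x) (hx0 : ∀ i, 0 < x 0 i)
    (hb : ∀ i, 0 < b i) (hdiag : ∀ i, 0 < a i i) (hnn : ∀ i j, 0 ≤ a i j)
    (i : Fin n) {M : ℝ} (hM : 1 / a i i < M) :
    ∀ᶠ t in atTop, x t i < M := by
  have hainv : 0 < 1 / a i i := by have := hdiag i; positivity
  set M' : ℝ := (1 / a i i + M) / 2 with hM'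
  have hM'pos : 0 < M' := by rw [hM']; linarith
  have hM'lt : M' < M := by rw [hM']; linarith
  have hM'gt : 1 / a i i < M' := by rw [hM']; linarith
  have haM : 1 < a i i * M' := by
    rw [div_lt_iff₀ (hdiag i)] at hM'gt; linarith
  set r : ℝ := b i * (1 - a i i * M') with hr
  have hrneg : r < 0 := mul_neg_of_pos_of_neg (hb i) (by linarith)
  have H : ∀ s t, (0:ℝ) ≤ s → s ≤ t →
      (∀ u ∈ Icc s t, Real.log M' ≤ Real.log (x u i)) →
      Real.log (x t i) ≤ Real.log (x s i) + r * (t - s) := by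
    intro s t hs hst hyp
    apply LV_core_le hs hst (fun u hu => LV_logderiv hsol hx0 i (le_trans hs hu.1))
    intro u hu
    have hu0 : (0:ℝ) ≤ u := le_trans hs hu.1
    have hxM : M' ≤ x u i := by
      have := hyp u hu
      calc M' = Real.exp (Real.log M') := (Real.exp_log hM'pos).symm
        _ ≤ Real.exp (Real.log (x u i)) := Real.exp_le_exp.2 this
        _ = x u i := Real.exp_log (LV_pos hsol hx0 u hu0 i)
    have halpha : a i i * M' ≤ alphaLV a i (x u) := by
      have h1 : a i i * x u i ≤ alphaLV a i (x u) := by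
        apply Finset.single_le_sum (f := fun j => a i j * x u j)
          (fun j _ => mul_nonneg (hnn i j) (hsol.1 u hu0 j)) (Finset.mem_univ i)
      nlinarith [hdiag i]
    rw [hr]
    have : 1 - alphaLV a i (x u) ≤ 1 - a i i * M' := by linarith
    exact mul_le_mul_of_nonneg_left this (le_of_lt (hb i))
  have hcont : ContinuousOn (fun t => Real.log (x t i)) (Ici 0) := LV_contlog hsol hx0 i
  have hconc := LV_inv_lemma hrneg hcont H (Real.log M - Real.log M')
    (by linarith [Real.log_lt_log hM'pos hM'lt])
  filter_upwards [hconc, eventually_ge_atTop (0:ℝ)] with t ht ht0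
  have : Real.log (x t i) < Real.log M := by linarith
  calc x t i = Real.exp (Real.log (x t i)) := (Real.exp_log (LV_pos hsol hx0 t ht0 i)).symm
    _ < Real.exp (Real.log M) := Real.exp_lt_exp.2 this
    _ = M := Real.exp_log (lt_trans hainv hM)

end Basics


lemma LV_div_mono {A B1 B2 : ℝ} (hA : A ≤ 0) (hB1 : 0 < B1) (hB12 : B1 ≤ B2) :
    A / B1 ≤ A / B2 := by
  rw [div_le_div_iff₀ hB1 (lt_of_lt_of_le hB1 hB12)]
  nlinarith

section Extinct

variable {n : ℕ} {b : Fin n → ℝ} {a : Fin n → Fin n → ℝ} {x : ℝ → Fin n → ℝ}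

lemma LV_extinct (hn : 2 ≤ n) (hb : ∀ i, 0 < b i) (hdiag : ∀ i, 0 < a i i)
    (hnn : ∀ i j, 0 ≤ a i j)
    (h1 : ∀ l j : Fin n, l < j → a j l < a l l)
    (h2 : ∀ i i' j : Fin n, i ≤ i' → i' ≤ j → a i' j ≤ a i j)
    (hsol : IsLVSolution b a x) (hx0 : ∀ i, 0 < x 0 i) :
    ∀ m : ℕ, ∀ i : Fin n, (i : ℕ) = m → m < n - 1 →
      Tendsto (fun t => x t i) atTop (𝓝 0) := by
  intro m
  induction m using Nat.strong_induction_on with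
  | _ m IH =>
  intro i him hm
  have hn0 : 0 < n := by omega
  have huniv : (Finset.univ : Finset (Fin n)).Nonempty := ⟨i, Finset.mem_univ i⟩
  obtain ⟨bmin, hbmin⟩ : ∃ v : ℝ, v = Finset.univ.inf' huniv b := ⟨_, rfl⟩
  obtain ⟨bmax, hbmax⟩ : ∃ v : ℝ, v = Finset.univ.sup' huniv b := ⟨_, rfl⟩
  have hbminpos : 0 < bmin := by
    rw [hbmin, Finset.lt_inf'_iff]; exact fun j _ => hb j
  have hbminle : ∀ j, bmin ≤ b j := fun j => by
    rw [hbmin]; exact Finset.inf'_le _ (Finset.mem_univ j)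
  have hbmaxge : ∀ j, b j ≤ bmax := fun j => by
    rw [hbmax]; exact Finset.le_sup' _ (Finset.mem_univ j)
  have hbmaxpos : 0 < bmax := lt_of_lt_of_le (hb i) (hbmaxge i)
  obtain ⟨Amax, hAmax⟩ : ∃ v : ℝ, v = ∑ p : Fin n × Fin n, a p.1 p.2 := ⟨_, rfl⟩
  have hAle : ∀ k j, a k j ≤ Amax := by
    intro k j
    rw [hAmax]
    exact Finset.single_le_sum (f := fun p : Fin n × Fin n => a p.1 p.2)
      (fun p _ => hnn p.1 p.2) (Finset.mem_univ (k, j))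
  have hA0 : 0 ≤ Amax := le_trans (hnn i i) (hAle i i)
  set D := Finset.univ.filter (fun j : Fin n => j < i) with hD
  set Surv := Finset.univ.filter (fun j : Fin n => ¬ j < i) with hSurvdef
  have hiSurv : i ∈ Surv := by simp [hSurvdef]
  have hSne : Surv.Nonempty := ⟨i, hiSurv⟩
  set P := Finset.univ.filter (fun j : Fin n => i < j) with hPdef
  have hlastlt : n - 1 < n := by omega
  have hilast : i < (⟨n-1, hlastlt⟩ : Fin n) := by
    rw [Fin.lt_def]; simpa using by omega
  have hPne : P.Nonempty := ⟨⟨n-1, hlastlt⟩, by simp [hPdef]; exact hilast⟩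
  -- dominance: rows in P are dominated by row i on surviving columns
  have hdom : ∀ j ∈ P, ∀ k ∈ Surv, a j k ≤ a i k := by
    intro j hj k hk
    have hij : i < j := by simpa [hPdef] using hj
    have hik : i ≤ k := by
      have := (by simpa [hSurvdef] using hk : ¬ k < i)
      exact not_lt.1 this
    rcases le_or_gt j k with hjk | hkj
    · exact h2 i j k (le_of_lt hij) hjk
    · have ha1 := h1 k j hkj
      have ha2 := h2 i k k hik le_rfl
      linarith
  -- dead species vanish (induction hypothesis)
  have hDdead : ∀ j ∈ D, Tendsto (fun t => x t j) atTop (𝓝 0) := by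
    intro j hj
    have hji : j < i := by simpa [hD] using hj
    have hjm : (j:ℕ) < m := him ▸ (Fin.lt_def.1 hji)
    exact IH (j:ℕ) hjm j rfl (by omega)
  set dead : Fin n → ℝ → ℝ := fun k u => ∑ j ∈ D, a k j * x u j with hdeaddef
  have hdead0 : ∀ k, Tendsto (dead k) atTop (𝓝 0) := by
    intro k
    have hz : (0:ℝ) = ∑ j ∈ D, (0:ℝ) := by simp
    rw [hdeaddef]
    simp only
    rw [hz]
    exact tendsto_finset_sum _ (fun j hj => by
      simpa using (hDdead j hj).const_mul (a k j))
  have hdeadev : ∀ η : ℝ, 0 < η → ∀ᶠ u in atTop, ∀ k, dead k u < η := by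
    intro η hη
    rw [eventually_all]
    exact fun k => (hdead0 k).eventually_lt_const hη
  -- ### total persistence of surviving species
  obtain ⟨ρ, hρdef⟩ : ∃ v : ℝ, v = min (1/2) (1/(4*(n*Amax+1))) := ⟨_, rfl⟩
  have hnA1 : (0:ℝ) < n*Amax+1 := by
    have : (0:ℝ) ≤ (n:ℝ) * Amax := mul_nonneg (Nat.cast_nonneg n) hA0
    linarith
  have hρpos : 0 < ρ := by
    rw [hρdef]
    exact lt_min (by norm_num) (one_div_pos.2 (by linarith))
  have hρhalf : ρ ≤ 1/2 := by rw [hρdef]; exact min_le_left _ _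
  obtain ⟨R0p, hR0pdef⟩ : ∃ v : ℝ, v = Real.log ρ / bmin := ⟨_, rfl⟩
  have hlogρ : Real.log ρ < 0 := Real.log_neg hρpos (by linarith)
  have hR0pneg : R0p < 0 := by rw [hR0pdef]; exact div_neg_of_neg_of_pos hlogρ hbminpos
  set Fper : ℝ → ℝ := fun t => Surv.inf' hSne (fun k => -(Real.log (x t k) / b k)) with hFperdef
  have hFpercont : ContinuousOn Fper (Ici 0) :=
    LV_contOn_inf' Surv hSne _ (fun k => ((LV_contlog hsol hx0 k).div_const (b k)).neg)
  obtain ⟨T1, hT1⟩ := (eventually_atTop).1 (hdeadev (1/4) (by norm_num))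
  obtain ⟨Tper, hTperdef⟩ : ∃ v : ℝ, v = max 0 T1 := ⟨_, rfl⟩
  have hTper0 : (0:ℝ) ≤ Tper := by rw [hTperdef]; exact le_max_left _ _
  have Hper : ∀ s t, Tper ≤ s → s ≤ t → (∀ u ∈ Icc s t, -R0p ≤ Fper u) →
      Fper t ≤ Fper s + (-(1/2)) * (t - s) := by
    intro s t hs hst hyp
    have hs0 : (0:ℝ) ≤ s := le_trans hTper0 hs
    have hkey : ∀ u ∈ Icc s t, ∀ k ∈ Surv, alphaLV a k (x u) ≤ 1/2 := by
      intro u hu k hk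
      have hu0 : (0:ℝ) ≤ u := le_trans hs0 hu.1
      have hxk : ∀ k' ∈ Surv, x u k' ≤ ρ := by
        intro k' hk'
        have h5 : -R0p ≤ -(Real.log (x u k') / b k') :=
          (Finset.le_inf'_iff hSne _).1 (hyp u hu) k' hk'
        have h6 : Real.log (x u k') / b k' ≤ R0p := by linarith
        have h7 : Real.log (x u k') ≤ R0p * b k' := (div_le_iff₀ (hb k')).1 h6
        have h8 : R0p * b k' ≤ Real.log ρ := by
          have h9 : R0p ≤ 0 := le_of_lt hR0pneg
          have h10 : R0p * b k' ≤ R0p * bmin :=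
            mul_le_mul_of_nonpos_left (hbminle k') h9
          have h11 : R0p * bmin = Real.log ρ := by
            rw [hR0pdef]; exact div_mul_cancel₀ _ (ne_of_gt hbminpos)
          linarith
        calc x u k' = Real.exp (Real.log (x u k')) :=
              (Real.exp_log (LV_pos hsol hx0 u hu0 k')).symm
          _ ≤ Real.exp (Real.log ρ) := Real.exp_le_exp.2 (le_trans h7 h8)
          _ = ρ := Real.exp_log hρpos
      have hsplit : alphaLV a k (x u)
          = (∑ j ∈ D, a k j * x u j) + ∑ j ∈ Surv, a k j * x u j := by
        rw [alphaLV, hD, hSurvdef,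
          Finset.sum_filter_add_sum_filter_not Finset.univ (fun j : Fin n => j < i)]
      have hdeadu : (∑ j ∈ D, a k j * x u j) < 1/4 := by
        apply hT1 u _ k
        have : T1 ≤ Tper := by rw [hTperdef]; exact le_max_right _ _
        linarith [hu.1]
      have hsurvu : ∑ j ∈ Surv, a k j * x u j ≤ 1/4 := by
        have hstep : ∑ j ∈ Surv, a k j * x u j ≤ ∑ _j ∈ Surv, Amax * ρ := by
          apply Finset.sum_le_sum
          intro j hj
          exact mul_le_mul (hAle k j) (hxk j hj) (hsol.1 u hu0 j) hA0
        have hcard : (Surv.card : ℝ) ≤ n := by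
          have := Finset.card_le_card (Finset.subset_univ Surv)
          rw [Finset.card_univ, Fintype.card_fin] at this
          exact_mod_cast this
        have hρ2 : ρ ≤ 1/(4*(n*Amax+1)) := by rw [hρdef]; exact min_le_right _ _
        have h12 : ρ * (4*(n*Amax+1)) ≤ 1 := by
          rw [le_div_iff₀ (by linarith : (0:ℝ) < 4*(n*Amax+1))] at hρ2; linarith
        calc ∑ j ∈ Surv, a k j * x u j ≤ ∑ _j ∈ Surv, Amax * ρ := hstep
          _ = Surv.card * (Amax * ρ) := by rw [Finset.sum_const, nsmul_eq_mul]
          _ ≤ n * (Amax * ρ) := by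
              apply mul_le_mul_of_nonneg_right hcard
              exact mul_nonneg hA0 (le_of_lt hρpos)
          _ ≤ 1/4 := by nlinarith
      linarith
    obtain ⟨k0, hk0S, hk0eq⟩ := Finset.exists_mem_eq_inf' hSne
      (fun k => -(Real.log (x s k) / b k))
    have hcomp : -(Real.log (x t k0) / b k0)
        ≤ -(Real.log (x s k0) / b k0) + (-(1/2)) * (t - s) := by
      apply LV_core_le hs0 hst
        (fun u hu => ((LV_logderiv hsol hx0 k0 (le_trans hs0 hu.1)).div_const (b k0)).neg)
      intro u hu
      have halpha := hkey u hu k0 hk0S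
      rw [mul_div_cancel_left₀ _ (ne_of_gt (hb k0))]
      linarith
    calc Fper t ≤ -(Real.log (x t k0) / b k0) := Finset.inf'_le _ hk0S
      _ ≤ -(Real.log (x s k0) / b k0) + (-(1/2)) * (t - s) := hcomp
      _ = Fper s + (-(1/2)) * (t - s) := by simp only [hFperdef]; rw [hk0eq]
  have hFconc := LV_inv_lemma (by norm_num : -(1/2) < (0:ℝ))
    (hFpercont.mono (fun u hu => le_trans hTper0 hu)) Hper 1 one_pos
  obtain ⟨m0, hm0def⟩ : ∃ v : ℝ, v = Real.exp ((R0p - 1) * bmax) := ⟨_, rfl⟩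
  have hm0pos : 0 < m0 := by rw [hm0def]; exact Real.exp_pos _
  have hlogm0 : Real.log m0 = (R0p - 1) * bmax := by rw [hm0def, Real.log_exp]
  have hlogm0neg : Real.log m0 ≤ 0 := by
    rw [hlogm0]; nlinarith
  have hpers : ∀ᶠ t in atTop, ∃ k ∈ Surv, m0 ≤ x t k := by
    filter_upwards [hFconc, eventually_ge_atTop (0:ℝ)] with t ht ht0
    have h13 : Fper t < -(R0p - 1) := by linarith
    rw [hFperdef] at h13
    obtain ⟨k, hkS, hk⟩ := (Finset.inf'_lt_iff hSne).1 h13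
    refine ⟨k, hkS, ?_⟩
    have h14 : R0p - 1 < Real.log (x t k) / b k := by linarith
    have h15 : (R0p - 1) * b k < Real.log (x t k) := (lt_div_iff₀ (hb k)).1 h14
    have h16 : (R0p - 1) * bmax ≤ (R0p - 1) * b k :=
      mul_le_mul_of_nonpos_left (hbmaxge k) (by linarith)
    calc m0 = Real.exp ((R0p - 1) * bmax) := hm0def
      _ ≤ Real.exp (Real.log (x t k)) := Real.exp_le_exp.2 (by linarith)
      _ = x t k := Real.exp_log (LV_pos hsol hx0 t ht0 k)
  -- ### the comparison functional σ
  obtain ⟨c, hcdef⟩ : ∃ v : ℝ, v = P.inf' hPne (fun j => a i i - a j i) := ⟨_, rfl⟩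
  have hcpos : 0 < c := by
    rw [hcdef, Finset.lt_inf'_iff]
    intro j hj
    have hij : i < j := by simpa [hPdef] using hj
    have := h1 i j hij
    linarith
  set g : Fin n → ℝ → ℝ :=
    fun j t => Real.log (x t i) / b i - Real.log (x t j) / b j with hgdef
  set σ : ℝ → ℝ := fun t => P.inf' hPne (fun j => g j t) with hσdef
  have hσcont : ContinuousOn σ (Ici 0) :=
    LV_contOn_inf' P hPne _ (fun j =>
      ((LV_contlog hsol hx0 i).div_const (b i)).sub
        ((LV_contlog hsol hx0 j).div_const (b j)))
  have hgd : ∀ j : Fin n, ∀ u ∈ Ici (0:ℝ), HasDerivWithinAt (g j)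
      ((b i * (1 - alphaLV a i (x u))) / b i
        - (b j * (1 - alphaLV a j (x u))) / b j) (Ici 0) u :=
    fun j u hu => ((LV_logderiv hsol hx0 i hu).div_const (b i)).sub
      ((LV_logderiv hsol hx0 j hu).div_const (b j))
  -- eventual upper bounds for the partners
  obtain ⟨C2, hC2def⟩ : ∃ v : ℝ, v = P.sup' hPne (fun j => Real.log (2 / a j j) / b j) := ⟨_, rfl⟩
  have hC2ev : ∀ᶠ t in atTop, ∀ j : Fin n, x t j < 2 / a j j := by
    rw [eventually_all]
    intro j
    apply LV_upper hsol hx0 hb hdiag hnn j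
    have h17 : 0 < 1 / a j j := by have := hdiag j; positivity
    have h18 : 2 / a j j = 1 / a j j + 1 / a j j := by ring
    linarith
  -- σ tends to -∞
  have hσbot : Tendsto σ atTop atBot := by
    rw [tendsto_atBot]
    intro R
    obtain ⟨ξ', hξ'def⟩ : ∃ v : ℝ, v = Real.exp (b i * ((R - 1) + Real.log m0 / bmin)) :=
      ⟨_, rfl⟩
    obtain ⟨ξ, hξdef⟩ : ∃ v : ℝ, v = min m0 ξ' := ⟨_, rfl⟩
    have hξ'pos : 0 < ξ' := by rw [hξ'def]; exact Real.exp_pos _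
    have hξpos : 0 < ξ := by rw [hξdef]; exact lt_min hm0pos hξ'pos
    have hξm0 : ξ ≤ m0 := by rw [hξdef]; exact min_le_left _ _
    have hξξ' : ξ ≤ ξ' := by rw [hξdef]; exact min_le_right _ _
    obtain ⟨r, hrdef⟩ : ∃ v : ℝ, v = -(c * ξ) / 2 := ⟨_, rfl⟩
    have hrneg : r < 0 := by
      rw [hrdef]
      exact div_neg_of_neg_of_pos (neg_lt_zero.2 (mul_pos hcpos hξpos)) two_pos
    obtain ⟨T2, hT2⟩ := eventually_atTop.1
      (hdeadev (c*ξ/2) (div_pos (mul_pos hcpos hξpos) two_pos))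
    obtain ⟨T3, hT3⟩ := eventually_atTop.1 hpers
    obtain ⟨T, hTdef⟩ : ∃ v : ℝ, v = max 0 (max T2 T3) := ⟨_, rfl⟩
    have hT0 : (0:ℝ) ≤ T := by rw [hTdef]; exact le_max_left _ _
    have H : ∀ s t, T ≤ s → s ≤ t → (∀ u ∈ Icc s t, R - 1 ≤ σ u) →
        σ t ≤ σ s + r * (t - s) := by
      intro s t hs hst hyp
      have hs0 : (0:ℝ) ≤ s := le_trans hT0 hs
      -- pointwise lower bound for x_i
      have hxi : ∀ u ∈ Icc s t, ξ ≤ x u i := by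
        intro u hu
        have hu0 : (0:ℝ) ≤ u := le_trans hs0 hu.1
        have huT : T ≤ u := le_trans hs hu.1
        have huT3 : T3 ≤ u := by
          have : T3 ≤ T := by rw [hTdef]; exact le_trans (le_max_right T2 T3) (le_max_right _ _)
          linarith
        obtain ⟨k, hkS, hkx⟩ := hT3 u huT3
        rcases eq_or_ne k i with heq | hne
        · rw [heq] at hkx; exact le_trans hξm0 hkx
        · have hik : i < k := by
            have h18 : ¬ k < i := by simpa [hSurvdef] using hkS
            exact lt_of_le_of_ne (not_lt.1 h18) (Ne.symm hne)
          have hkP : k ∈ P := by simp [hPdef]; exact hik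
          have h5 : σ u ≤ g k u := Finset.inf'_le _ hkP
          have h6 : Real.log m0 ≤ Real.log (x u k) := Real.log_le_log hm0pos hkx
          have h7 : Real.log m0 / bmin ≤ Real.log (x u k) / b k := by
            calc Real.log m0 / bmin ≤ Real.log m0 / b k :=
                LV_div_mono hlogm0neg hbminpos (hbminle k)
              _ ≤ Real.log (x u k) / b k := (div_le_div_iff_of_pos_right (hb k)).2 h6
          have h8 : R - 1 + Real.log m0 / bmin ≤ Real.log (x u i) / b i := by
            have h19 := hyp u hu
            have h20 : g k u = Real.log (x u i) / b i - Real.log (x u k) / b k := rfl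
            rw [h20] at h5
            linarith
          have h21 : b i * ((R - 1) + Real.log m0 / bmin) ≤ Real.log (x u i) := by
            have h22 := mul_le_mul_of_nonneg_left h8 (le_of_lt (hb i))
            have h23 : b i * (Real.log (x u i) / b i) = Real.log (x u i) := by
              rw [mul_comm]; exact div_mul_cancel₀ _ (ne_of_gt (hb i))
            linarith
          calc ξ ≤ ξ' := hξξ'
            _ = Real.exp (b i * ((R - 1) + Real.log m0 / bmin)) := hξ'def
            _ ≤ Real.exp (Real.log (x u i)) := Real.exp_le_exp.2 h21
            _ = x u i := Real.exp_log (LV_pos hsol hx0 u hu0 i)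
      -- componentwise derivative bound
      have hdb : ∀ j ∈ P, ∀ u ∈ Icc s t,
          (b i * (1 - alphaLV a i (x u))) / b i
            - (b j * (1 - alphaLV a j (x u))) / b j ≤ r := by
        intro j hjP u hu
        have hu0 : (0:ℝ) ≤ u := le_trans hs0 hu.1
        have huT2 : T2 ≤ u := by
          have h40 : T2 ≤ T := by rw [hTdef]; exact le_trans (le_max_left T2 T3) (le_max_right _ _)
          linarith [hu.1]
        rw [mul_div_cancel_left₀ _ (ne_of_gt (hb i)),
          mul_div_cancel_left₀ _ (ne_of_gt (hb j))]
        have hsum : alphaLV a j (x u) - alphaLV a i (x u)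
            = (∑ k ∈ D, (a j k - a i k) * x u k)
              + ∑ k ∈ Surv, (a j k - a i k) * x u k := by
          rw [alphaLV, alphaLV, ← Finset.sum_sub_distrib]
          rw [hD, hSurvdef, Finset.sum_filter_add_sum_filter_not Finset.univ
            (fun k : Fin n => k < i) (fun k => (a j k - a i k) * x u k)]
          apply Finset.sum_congr rfl
          intro k _
          ring
        have hdeadpart : (∑ k ∈ D, (a j k - a i k) * x u k) < c*ξ/2 := by
          have h24 : (∑ k ∈ D, (a j k - a i k) * x u k) ≤ ∑ k ∈ D, a j k * x u k := by
            apply Finset.sum_le_sum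
            intro k _
            apply mul_le_mul_of_nonneg_right _ (hsol.1 u hu0 k)
            linarith [hnn i k]
          exact lt_of_le_of_lt h24 (hT2 u huT2 j)
        have hsurvpart : (∑ k ∈ Surv, (a j k - a i k) * x u k) ≤ -(c * ξ) := by
          have h25 : ∀ k ∈ Surv, (a j k - a i k) * x u k
              ≤ if k = i then -(c * ξ) else 0 := by
            intro k hk
            rcases eq_or_ne k i with heq | hne
            · rw [if_pos heq, heq]
              have h26 : c ≤ a i i - a j i := by
                rw [hcdef]; exact Finset.inf'_le _ hjP
              have h27 := hxi u hu
              nlinarith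
            · rw [if_neg hne]
              apply mul_nonpos_of_nonpos_of_nonneg
              · have := hdom j hjP k hk
                linarith
              · exact hsol.1 u hu0 k
          calc (∑ k ∈ Surv, (a j k - a i k) * x u k)
              ≤ ∑ k ∈ Surv, (if k = i then -(c * ξ) else 0) := Finset.sum_le_sum h25
            _ = -(c * ξ) := by rw [Finset.sum_ite_eq' Surv i, if_pos hiSurv]
        have : (1 - alphaLV a i (x u)) - (1 - alphaLV a j (x u))
            = alphaLV a j (x u) - alphaLV a i (x u) := by ring
        rw [this, hsum, hrdef]
        linarith
      obtain ⟨j0, hj0, hj0eq⟩ := Finset.exists_mem_eq_inf' hPne (fun j => g j s)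
      have hcomp := LV_core_le hs0 hst
        (fun u hu => hgd j0 u (le_trans hs0 hu.1)) (hdb j0 hj0)
      calc σ t ≤ g j0 t := Finset.inf'_le _ hj0
        _ ≤ g j0 s + r * (t - s) := hcomp
        _ = σ s + r * (t - s) := by simp only [hσdef]; rw [hj0eq]
    have hconc := LV_inv_lemma hrneg
      (hσcont.mono (fun u hu => le_trans hT0 hu)) H 1 one_pos
    filter_upwards [hconc] with t ht
    linarith
  -- ### squeeze to zero
  have hxle : ∀ᶠ t in atTop, x t i ≤ Real.exp (b i * (σ t + C2)) := by
    filter_upwards [hC2ev, eventually_ge_atTop (0:ℝ)] with t hC2t ht0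
    obtain ⟨j0, hj0P, hj0eq⟩ := Finset.exists_mem_eq_inf' hPne (fun j => g j t)
    have hxj0pos : 0 < x t j0 := LV_pos hsol hx0 t ht0 j0
    have h28 : Real.log (x t j0) / b j0 ≤ C2 := by
      have h29 : Real.log (x t j0) ≤ Real.log (2 / a j0 j0) :=
        Real.log_le_log hxj0pos (le_of_lt (hC2t j0))
      refine le_trans ((div_le_div_iff_of_pos_right (hb j0)).2 h29) ?_
      rw [hC2def]
      exact Finset.le_sup' (fun j => Real.log (2 / a j j) / b j) hj0P
    have h30 : σ t = Real.log (x t i) / b i - Real.log (x t j0) / b j0 := by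
      simp only [hσdef]; rw [hj0eq]
    have h31 : Real.log (x t i) ≤ b i * (σ t + C2) := by
      have h32 : Real.log (x t i) / b i = σ t + Real.log (x t j0) / b j0 := by
        rw [h30]; ring
      have h33 : Real.log (x t i) / b i ≤ σ t + C2 := by rw [h32]; linarith
      have h34 := mul_le_mul_of_nonneg_left h33 (le_of_lt (hb i))
      have h35 : b i * (Real.log (x t i) / b i) = Real.log (x t i) := by
        rw [mul_comm]; exact div_mul_cancel₀ _ (ne_of_gt (hb i))
      linarith
    calc x t i = Real.exp (Real.log (x t i)) :=
        (Real.exp_log (LV_pos hsol hx0 t ht0 i)).symm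
      _ ≤ Real.exp (b i * (σ t + C2)) := Real.exp_le_exp.2 h31
  have hupper0 : Tendsto (fun t => Real.exp (b i * (σ t + C2))) atTop (𝓝 0) := by
    apply Real.tendsto_exp_atBot.comp
    apply Tendsto.const_mul_atBot (hb i)
    exact tendsto_atBot_add_const_right _ C2 hσbot
  apply tendsto_of_tendsto_of_tendsto_of_le_of_le' tendsto_const_nhds hupper0
  · filter_upwards [eventually_ge_atTop (0:ℝ)] with t ht
    exact hsol.1 t ht i
  · exact hxle

end Extinct


section LastSpecies

variable {n : ℕ} {b : Fin n → ℝ} {a : Fin n → Fin n → ℝ} {x : ℝ → Fin n → ℝ}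

lemma LV_last (hn : 2 ≤ n) (hb : ∀ i, 0 < b i) (hdiag : ∀ i, 0 < a i i)
    (hnn : ∀ i j, 0 ≤ a i j)
    (h1 : ∀ l j : Fin n, l < j → a j l < a l l)
    (h2 : ∀ i i' j : Fin n, i ≤ i' → i' ≤ j → a i' j ≤ a i j)
    (hsol : IsLVSolution b a x) (hx0 : ∀ i, 0 < x 0 i) :
    Tendsto (fun t => x t (⟨n-1, by omega⟩ : Fin n)) atTop
      (𝓝 ((a (⟨n-1, by omega⟩ : Fin n) (⟨n-1, by omega⟩ : Fin n))⁻¹)) := by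
  have hn0 : 0 < n := by omega
  set last : Fin n := ⟨n-1, by omega⟩ with hlastdef
  have hdead : ∀ j : Fin n, j ≠ last → Tendsto (fun t => x t j) atTop (𝓝 0) := by
    intro j hj
    apply LV_extinct hn hb hdiag hnn h1 h2 hsol hx0 (j:ℕ) j rfl
    have hj2 := j.2
    have : (j:ℕ) ≠ n - 1 := by
      intro h
      exact hj (Fin.ext (by simpa [hlastdef] using h))
    omega
  set E := Finset.univ.erase last with hEdef
  set dead : ℝ → ℝ := fun u => ∑ j ∈ E, a last j * x u j with hdeaddef
  have hdead0 : Tendsto dead atTop (𝓝 0) := by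
    have hmain : Tendsto (fun u => ∑ j ∈ E, a last j * x u j) atTop (𝓝 (∑ j ∈ E, (0:ℝ))) :=
      tendsto_finset_sum _ (fun j hj => by
        simpa using (hdead j (Finset.mem_erase.1 hj).1).const_mul (a last j))
    simpa [hdeaddef] using hmain
  have hsplit : ∀ u, alphaLV a last (x u) = dead u + a last last * x u last := by
    intro u
    rw [alphaLV, hdeaddef]
    simp only
    rw [hEdef, Finset.sum_erase_add Finset.univ _ (Finset.mem_univ last)]
  have halastpos : 0 < a last last := hdiag last
  have hlow : ∀ W : ℝ, 0 < W → W < 1/(a last last) → ∀ᶠ t in atTop, W < x t last := by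
    intro W hW0 hW1
    obtain ⟨W', hW'def⟩ : ∃ v : ℝ, v = (W + 1/(a last last))/2 := ⟨_, rfl⟩
    have hainv : 0 < 1/(a last last) := by positivity
    have hW'0 : 0 < W' := by rw [hW'def]; linarith
    have hWW' : W < W' := by rw [hW'def]; linarith
    have hW'lt : W' < 1/(a last last) := by rw [hW'def]; linarith
    have hε1 : 0 < 1 - a last last * W' := by
      rw [lt_div_iff₀ halastpos] at hW'lt
      nlinarith
    obtain ⟨ε1, hε1def⟩ : ∃ v : ℝ, v = 1 - a last last * W' := ⟨_, rfl⟩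
    have hε1pos : 0 < ε1 := by rw [hε1def]; exact hε1
    have hdev : ∀ᶠ u in atTop, dead u < ε1/2 :=
      hdead0.eventually_lt_const (by linarith)
    obtain ⟨T1, hT1⟩ := eventually_atTop.1 hdev
    obtain ⟨T, hTdef⟩ : ∃ v : ℝ, v = max 0 T1 := ⟨_, rfl⟩
    have hT0 : (0:ℝ) ≤ T := by rw [hTdef]; exact le_max_left _ _
    obtain ⟨r, hrdef⟩ : ∃ v : ℝ, v = -(b last * ε1 / 2) := ⟨_, rfl⟩
    have hrneg : r < 0 := by
      rw [hrdef]
      have : 0 < b last * ε1 / 2 := div_pos (mul_pos (hb last) hε1pos) two_pos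
      linarith
    have H : ∀ s t, T ≤ s → s ≤ t →
        (∀ u ∈ Icc s t, -(Real.log W') ≤ -(Real.log (x u last))) →
        -(Real.log (x t last)) ≤ -(Real.log (x s last)) + r * (t - s) := by
      intro s t hs hst hyp
      have hs0 : (0:ℝ) ≤ s := le_trans hT0 hs
      apply LV_core_le hs0 hst
        (fun u hu => (LV_logderiv hsol hx0 last (le_trans hs0 hu.1)).neg)
      intro u hu
      have hu0 : (0:ℝ) ≤ u := le_trans hs0 hu.1
      have hxW' : x u last ≤ W' := by
        have h3 := hyp u hu
        have h4 : Real.log (x u last) ≤ Real.log W' := by linarith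
        calc x u last = Real.exp (Real.log (x u last)) :=
            (Real.exp_log (LV_pos hsol hx0 u hu0 last)).symm
          _ ≤ Real.exp (Real.log W') := Real.exp_le_exp.2 h4
          _ = W' := Real.exp_log hW'0
      have hdu : dead u < ε1/2 := by
        apply hT1
        have : T1 ≤ T := by rw [hTdef]; exact le_max_right _ _
        linarith [hu.1]
      have halpha : alphaLV a last (x u) ≤ 1 - ε1/2 := by
        rw [hsplit u]
        have : a last last * x u last ≤ a last last * W' :=
          mul_le_mul_of_nonneg_left hxW' (le_of_lt halastpos)
        rw [hε1def] at hdu ⊢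
        linarith
      rw [hrdef]
      have h5 : ε1/2 ≤ 1 - alphaLV a last (x u) := by linarith
      nlinarith [hb last]
    have hcont : ContinuousOn (fun t => -(Real.log (x t last))) (Ici 0) :=
      (LV_contlog hsol hx0 last).neg
    have hconc := LV_inv_lemma hrneg (hcont.mono (fun u hu => le_trans hT0 hu)) H
      (Real.log W' - Real.log W) (by linarith [Real.log_lt_log hW0 hWW'])
    filter_upwards [hconc, eventually_ge_atTop (0:ℝ)] with t ht ht0
    have h6 : Real.log W < Real.log (x t last) := by linarith
    calc W = Real.exp (Real.log W) := (Real.exp_log hW0).symm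
      _ < Real.exp (Real.log (x t last)) := Real.exp_lt_exp.2 h6
      _ = x t last := Real.exp_log (LV_pos hsol hx0 t ht0 last)
  rw [show ((a (⟨n-1, by omega⟩ : Fin n) (⟨n-1, by omega⟩ : Fin n))⁻¹ : ℝ)
      = (a last last)⁻¹ from rfl]
  rw [tendsto_order]
  constructor
  · intro W hW
    rcases le_or_gt W 0 with hW0 | hW0
    · filter_upwards [eventually_ge_atTop (0:ℝ)] with t ht
      exact lt_of_le_of_lt hW0 (LV_pos hsol hx0 t ht last)
    · apply hlow W hW0
      rwa [one_div]
  · intro M hM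
    apply LV_upper hsol hx0 hb hdiag hnn last
    rwa [one_div]

end LastSpecies


/-- Corollary 4.6: under (2.5), i.e. `a_{jℓ} < a_{ℓℓ}` for `ℓ < j` and
`a_{jj} ≤ a_{j-1,j} ≤ ⋯ ≤ a_{1j}`, the point `Y^{{n}}` is a global attractor. -/
theorem corollary4_6 (n : ℕ) (hn : 2 ≤ n) (b : Fin n → ℝ) (a : Fin n → Fin n → ℝ)
    (hb : ∀ i, 0 < b i) (hdiag : ∀ i, 0 < a i i) (hnn : ∀ i j, 0 ≤ a i j)
    (h1 : ∀ l j : Fin n, l < j → a j l < a l l)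
    (h2 : ∀ i i' j : Fin n, i ≤ i' → i' ≤ j → a i' j ≤ a i j) :
    IsGlobalAttractor b a (projLV (Yvec a) {j : Fin n | (j : ℕ) = n - 1}) := by
  have hn0 : 0 < n := by omega
  refine ⟨⟨?_, ?_⟩, ?_⟩
  · -- nonnegativity of the equilibrium
    intro i
    simp only [projLV, Yvec, Set.mem_setOf_eq]
    split
    · exact inv_nonneg.2 (le_of_lt (hdiag i))
    · exact le_rfl
  · -- equilibrium equations
    intro i
    by_cases hi : (i:ℕ) = n - 1
    · have hyi : projLV (Yvec a) {j : Fin n | (j:ℕ) = n-1} i = (a i i)⁻¹ := by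
        simp [projLV, Yvec, Set.mem_setOf_eq, hi]
      have halpha : alphaLV a i (projLV (Yvec a) {j : Fin n | (j:ℕ) = n-1}) = 1 := by
        rw [alphaLV]
        rw [Finset.sum_eq_single i]
        · rw [hyi]; exact mul_inv_cancel₀ (ne_of_gt (hdiag i))
        · intro j _ hji
          have hj0 : projLV (Yvec a) {j : Fin n | (j:ℕ) = n-1} j = 0 := by
            simp only [projLV, Set.mem_setOf_eq]
            rw [if_neg]
            intro hj
            exact hji (Fin.ext (by rw [hj, hi]))
          rw [hj0, mul_zero]
        · intro h; exact absurd (Finset.mem_univ i) h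
      rw [halpha]; ring
    · have hyi : projLV (Yvec a) {j : Fin n | (j:ℕ) = n-1} i = 0 := by
        simp [projLV, Set.mem_setOf_eq, hi]
      rw [hyi]; ring
  · -- global attraction
    intro x hsol hx0 i
    by_cases hi : (i:ℕ) = n - 1
    · have hyi : projLV (Yvec a) {j : Fin n | (j:ℕ) = n-1} i = (a i i)⁻¹ := by
        simp [projLV, Yvec, Set.mem_setOf_eq, hi]
      rw [hyi]
      have hieq : i = (⟨n-1, by omega⟩ : Fin n) := Fin.ext (by simpa using hi)
      rw [hieq]
      exact LV_last hn hb hdiag hnn h1 h2 hsol hx0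
    · have hyi : projLV (Yvec a) {j : Fin n | (j:ℕ) = n-1} i = 0 := by
        simp [projLV, Set.mem_setOf_eq, hi]
      rw [hyi]
      have hlt : (i:ℕ) < n - 1 := by have := i.2; omega
      exact LV_extinct hn hb hdiag hnn h1 h2 hsol hx0 (i:ℕ) i rfl hlt
end
end
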